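/- Let f : ℝ^(n+m) → ℝ and g_j : ℝ^(n+m) → ℝ (j = 1, …, l) be convex and differentiable, and fix finitely many linearization points (x¹,y¹), …, (xᵏ,yᵏ) ∈ ℝ^(n+m). If the OA master problem is infeasible — that is, there is no (x, y, μ) with x ∈ [x̲, x̄], y ∈ [y̲, ȳ] integer, μ ∈ ℝ satisfying all OA cuts f(xⁱ,yⁱ) + ⟪∇f(xⁱ,yⁱ), (x,y) − (xⁱ,yⁱ)⟫ ≤ μ and g_j(xⁱ,yⁱ) + ⟪∇g_j(xⁱ,yⁱ), (x,y) − (xⁱ,yⁱ)⟫ ≤ 0 — then the MINLP itself is infeasible: there is no (x,y) with x ∈ [x̲, x̄], y ∈ [y̲, ȳ] integer, and g_j(x,y) ≤ 0 for all j. -/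

import Mathlib

open scoped RealInnerProductSpace

open scoped RealInnerProductSpace

lemma oa_gradient_ineq {E : Type*} [NormedAddCommGroup E] [InnerProductSpace ℝ E]
    [CompleteSpace E] {f : E → ℝ} (hconv : ConvexOn ℝ Set.univ f)
    (hdiff : Differentiable ℝ f) (q p : E) :
    f q + ⟪gradient f q, p - q⟫ ≤ f p := by
  have hinner : ⟪gradient f q, p - q⟫ = fderiv ℝ f q (p - q) := by
    simp [gradient, InnerProductSpace.toDual_symm_apply]
  set φ : ℝ → ℝ := fun t => f (q + t • (p - q)) with hφ
  have hline : HasDerivAt (fun t : ℝ => q + t • (p - q)) (p - q) 0 := by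
    simpa using ((hasDerivAt_id (0:ℝ)).smul_const (p - q)).const_add q
  have hφderiv : HasDerivAt φ (fderiv ℝ f q (p - q)) 0 := by
    have h1 : HasFDerivAt f (fderiv ℝ f q) (q + (0:ℝ) • (p - q)) := by
      simpa using (hdiff q).hasFDerivAt
    exact h1.comp_hasDerivAt 0 hline
  have hφconv : ConvexOn ℝ Set.univ φ := by
    have hA : ConvexOn ℝ ((AffineMap.lineMap q p : ℝ →ᵃ[ℝ] E) ⁻¹' Set.univ)
        (f ∘ (AffineMap.lineMap q p : ℝ →ᵃ[ℝ] E)) := hconv.comp_affineMap _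
    have he : (f ∘ (AffineMap.lineMap q p : ℝ →ᵃ[ℝ] E)) = φ := by
      funext t
      simp [Function.comp, AffineMap.lineMap_apply_module', hφ, add_comm]
    simpa [he] using hA
  have hslope := hφconv.deriv_le_slope (Set.mem_univ (0:ℝ)) (Set.mem_univ (1:ℝ))
    one_pos (hφderiv.differentiableAt)
  rw [hφderiv.deriv] at hslope
  have : slope φ 0 1 = f p - f q := by
    simp [slope, φ]
  rw [this] at hslope
  rw [hinner]; linarith


/-- If the OA master problem (variable bounds, integrality, and the
outer-approximation cuts of the convex differentiable functions `f`, `g j` at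
finitely many linearization points) is infeasible, then the MINLP itself is
infeasible. A point `p : ℝ^(n+m)` encodes `(x, y)`: its first `n` coordinates
(indices `Fin.castAdd m i`) are `x`, its last `m` coordinates (indices
`Fin.natAdd n i`) are `y`. -/
theorem oa_master_infeasible_implies_minlp_infeasible {n m l k : ℕ}
    (f : EuclideanSpace ℝ (Fin (n + m)) → ℝ)
    (g : Fin l → EuclideanSpace ℝ (Fin (n + m)) → ℝ)
    (hfconv : ConvexOn ℝ Set.univ f)
    (hfdiff : Differentiable ℝ f)
    (hgconv : ∀ j, ConvexOn ℝ Set.univ (g j))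
    (hgdiff : ∀ j, Differentiable ℝ (g j))
    (xlo xhi : Fin n → ℝ) (ylo yhi : Fin m → ℝ)
    (pts : Fin k → EuclideanSpace ℝ (Fin (n + m)))
    (B : Set (EuclideanSpace ℝ (Fin (n + m))))
    (hB : B = {p | (∀ i : Fin n, xlo i ≤ p (Fin.castAdd m i) ∧ p (Fin.castAdd m i) ≤ xhi i) ∧
        (∀ i : Fin m, ylo i ≤ p (Fin.natAdd n i) ∧ p (Fin.natAdd n i) ≤ yhi i ∧
          ∃ z : ℤ, p (Fin.natAdd n i) = (z : ℝ))})
    (hinfeas : ¬ ∃ (p : EuclideanSpace ℝ (Fin (n + m))) (μ : ℝ), p ∈ B ∧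
        (∀ i, f (pts i) + ⟪gradient f (pts i), p - pts i⟫ ≤ μ) ∧
        (∀ i j, g j (pts i) + ⟪gradient (g j) (pts i), p - pts i⟫ ≤ 0)) :
    ¬ ∃ p : EuclideanSpace ℝ (Fin (n + m)), p ∈ B ∧ ∀ j, g j p ≤ 0 := by
  rintro ⟨p, hpB, hg⟩
  exact hinfeas ⟨p, f p, hpB,
    fun i => oa_gradient_ineq hfconv hfdiff (pts i) p,
    fun i j => le_trans (oa_gradient_ineq (hgconv j) (hgdiff j) (pts i) p) (hg j)⟩
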